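/- Let n ≥ 1 and let 𝔮, q1, q3, z be invertible elements of a commutative ring satisfying 𝔮² q1 q3 = 1. For Young diagrams λ, μ set H(λ,μ) := #{s ∈ λ : h_{μ,λ}(s) ≡ 0 (mod n)} + #{t ∈ μ : h_{λ,μ}(t) ≡ 0 (mod n)}. Then N_{λμ}(z) · N_{μλ}(z^{−1}) = 𝔮^{2H(λ,μ)} · N_{λμ}(𝔮^{−2}z) · N_{μλ}(𝔮^{−2}z^{−1}); equivalently, the diagonal R-matrix R_{λμ}(z) := 𝔮^{−H(λ,μ)} N_{λμ}(z)/N_{λμ}(𝔮^{−2}z) satisfies the unitarity relation R_{λμ}(z) R_{μλ}(z^{−1}) = 1 (as an identity of rational functions). -/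

import Mathlib

open Finset

/-- Arm length of the (0-based) box `c` with respect to `μ` (may be negative). -/
def armZ (μ : YoungDiagram) (c : ℕ × ℕ) : ℤ := (μ.rowLen c.1 : ℤ) - c.2 - 1

/-- Leg length of the (0-based) box `c` with respect to `μ` (may be negative). -/
def legZ (μ : YoungDiagram) (c : ℕ × ℕ) : ℤ := (μ.colLen c.2 : ℤ) - c.1 - 1

/-- Relative hook length `h_{λ,μ}(s) = a_μ(s) + ℓ_λ(s) + 1`. -/
def relHook (lam mu : YoungDiagram) (c : ℕ × ℕ) : ℤ := armZ mu c + legZ lam c + 1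

/-- The bifundamental Nekrasov factor on `ALE_n × S¹`. -/
def nek {R : Type*} [CommRing R] (n : ℕ) (q1 q3 z : Rˣ) (lam mu : YoungDiagram) : R :=
  (∏ s ∈ lam.cells.filter (fun s => ((relHook mu lam s : ZMod n) = 0)),
    (1 - ((z * q1 ^ armZ lam s * q3 ^ (-legZ mu s - 1) : Rˣ) : R))) *
  (∏ t ∈ mu.cells.filter (fun t => ((relHook lam mu t : ZMod n) = 0)),
    (1 - ((z * q1 ^ (-armZ mu t - 1) * q3 ^ legZ lam t : Rˣ) : R)))

/-- `H(λ,μ) = #{s∈λ : h_{μ,λ}(s) ≡ 0 (mod n)} + #{t∈μ : h_{λ,μ}(t) ≡ 0 (mod n)}`. -/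
def Hcount (n : ℕ) (lam mu : YoungDiagram) : ℕ :=
  (lam.cells.filter (fun s => ((relHook mu lam s : ZMod n) = 0))).card +
  (mu.cells.filter (fun t => ((relHook lam mu t : ZMod n) = 0))).card


section AuxNek
variable {R : Type*} [CommRing R]

lemma keyR (a b Z Zi U V : R) (h1 : Z * Zi = 1) (h2 : a * b = 1) (h3 : U * V = b) :
    (1 - Z * U) * (1 - Zi * V) = b * ((1 - a * Z * U) * (1 - a * Zi * V)) := by
  linear_combination (b - a^2*b^2) * h1 + (Z*U + Zi*V - (a*b+1)) * h2 + (Z*Zi*(1 - a^2*b)) * h3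

lemma keyU (qq z u v : Rˣ) (huv : u * v = qq ^ 2) :
    (1 - ((z * u : Rˣ) : R)) * (1 - ((z⁻¹ * v : Rˣ) : R))
      = ((qq ^ 2 : Rˣ) : R) *
        ((1 - ((qq ^ (-2 : ℤ) * z * u : Rˣ) : R)) * (1 - ((qq ^ (-2 : ℤ) * z⁻¹ * v : Rˣ) : R))) := by
  have h1 : ((z : R)) * ((z⁻¹ : Rˣ) : R) = 1 := by
    rw [← Units.val_mul, mul_inv_cancel]; rfl
  have h2 : ((qq ^ (-2 : ℤ) : Rˣ) : R) * ((qq ^ 2 : Rˣ) : R) = 1 := by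
    rw [← Units.val_mul]
    rw [← zpow_natCast, ← zpow_add]; norm_num
  have h3 : ((u : R)) * ((v : R)) = ((qq ^ 2 : Rˣ) : R) := by
    rw [← Units.val_mul, huv]
  simpa only [Units.val_mul] using keyR _ _ _ _ _ _ h1 h2 h3

lemma huv_aux (qq q1 q3 : Rˣ) (hq : qq ^ 2 * q1 * q3 = 1) (a l : ℤ) :
    (q1 ^ a * q3 ^ (-l - 1)) * (q1 ^ (-a - 1) * q3 ^ l) = qq ^ 2 := by
  have h : qq ^ 2 = (q1 * q3)⁻¹ := by
    apply eq_inv_of_mul_eq_one_left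
    rw [← mul_assoc]; exact hq
  rw [mul_mul_mul_comm, ← zpow_add, ← zpow_add, h]
  simp only [show a + (-a - 1) = -1 by ring, show -l - 1 + l = -1 by ring, zpow_neg_one, mul_inv]

lemma key1 (qq q1 q3 z : Rˣ) (hq : qq ^ 2 * q1 * q3 = 1) (a l : ℤ) :
    (1 - ((z * q1 ^ a * q3 ^ (-l - 1) : Rˣ) : R)) * (1 - ((z⁻¹ * q1 ^ (-a - 1) * q3 ^ l : Rˣ) : R))
      = ((qq ^ 2 : Rˣ) : R) *
        ((1 - ((qq ^ (-2 : ℤ) * z * q1 ^ a * q3 ^ (-l - 1) : Rˣ) : R)) *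
         (1 - ((qq ^ (-2 : ℤ) * z⁻¹ * q1 ^ (-a - 1) * q3 ^ l : Rˣ) : R))) := by
  simpa only [mul_assoc] using keyU qq z (q1 ^ a * q3 ^ (-l - 1)) (q1 ^ (-a - 1) * q3 ^ l)
    (huv_aux qq q1 q3 hq a l)

lemma key2 (qq q1 q3 z : Rˣ) (hq : qq ^ 2 * q1 * q3 = 1) (a l : ℤ) :
    (1 - ((z * q1 ^ (-a - 1) * q3 ^ l : Rˣ) : R)) * (1 - ((z⁻¹ * q1 ^ a * q3 ^ (-l - 1) : Rˣ) : R))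
      = ((qq ^ 2 : Rˣ) : R) *
        ((1 - ((qq ^ (-2 : ℤ) * z * q1 ^ (-a - 1) * q3 ^ l : Rˣ) : R)) *
         (1 - ((qq ^ (-2 : ℤ) * z⁻¹ * q1 ^ a * q3 ^ (-l - 1) : Rˣ) : R))) := by
  have huv : (q1 ^ (-a - 1) * q3 ^ l) * (q1 ^ a * q3 ^ (-l - 1)) = qq ^ 2 := by
    rw [mul_comm]; exact huv_aux qq q1 q3 hq a l
  simpa only [mul_assoc] using keyU qq z (q1 ^ (-a - 1) * q3 ^ l) (q1 ^ a * q3 ^ (-l - 1)) huv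

lemma assemble {ι κ : Type*} (S1 : Finset ι) (S2 : Finset κ) (b : R)
    (f1 g1 f1' g1' : ι → R) (f2 g2 f2' g2' : κ → R)
    (h1 : ∀ s ∈ S1, f1 s * g1 s = b * (f1' s * g1' s))
    (h2 : ∀ t ∈ S2, f2 t * g2 t = b * (f2' t * g2' t)) :
    (∏ s ∈ S1, f1 s) * (∏ t ∈ S2, f2 t) * ((∏ t ∈ S2, g2 t) * (∏ s ∈ S1, g1 s))
      = b ^ (S1.card + S2.card) * ((∏ s ∈ S1, f1' s) * (∏ t ∈ S2, f2' t)) *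
        ((∏ t ∈ S2, g2' t) * (∏ s ∈ S1, g1' s)) := by
  have e1 : (∏ s ∈ S1, f1 s) * (∏ s ∈ S1, g1 s)
      = b ^ S1.card * ((∏ s ∈ S1, f1' s) * (∏ s ∈ S1, g1' s)) := by
    rw [← Finset.prod_mul_distrib, Finset.prod_congr rfl h1, Finset.prod_mul_distrib,
      Finset.prod_const, Finset.prod_mul_distrib]
  have e2 : (∏ t ∈ S2, f2 t) * (∏ t ∈ S2, g2 t)
      = b ^ S2.card * ((∏ t ∈ S2, f2' t) * (∏ t ∈ S2, g2' t)) := by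
    rw [← Finset.prod_mul_distrib, Finset.prod_congr rfl h2, Finset.prod_mul_distrib,
      Finset.prod_const, Finset.prod_mul_distrib]
  calc (∏ s ∈ S1, f1 s) * (∏ t ∈ S2, f2 t) * ((∏ t ∈ S2, g2 t) * (∏ s ∈ S1, g1 s))
      = ((∏ s ∈ S1, f1 s) * (∏ s ∈ S1, g1 s)) * ((∏ t ∈ S2, f2 t) * (∏ t ∈ S2, g2 t)) := by ring
    _ = _ := by rw [e1, e2, pow_add]; ring

end AuxNek

/-- Unitarity of the diagonal R-matrix:
`N_{λμ}(z) N_{μλ}(z⁻¹) = 𝔮^{2H(λ,μ)} N_{λμ}(𝔮⁻²z) N_{μλ}(𝔮⁻²z⁻¹)`,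
under the constraint `𝔮² q1 q3 = 1`; equivalently,
`R_{λμ}(z) = 𝔮^{-H(λ,μ)} N_{λμ}(z)/N_{λμ}(𝔮⁻²z)` satisfies `R_{λμ}(z) R_{μλ}(z⁻¹) = 1`. -/
theorem nek_unitarity {R : Type*} [CommRing R] (n : ℕ) (hn : 1 ≤ n)
    (qq q1 q3 z : Rˣ) (hq : qq ^ 2 * q1 * q3 = 1) (lam mu : YoungDiagram) :
    nek n q1 q3 z lam mu * nek n q1 q3 z⁻¹ mu lam
    = ((qq ^ (2 * Hcount n lam mu) : Rˣ) : R) *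
        nek n q1 q3 (qq ^ (-2 : ℤ) * z) lam mu *
        nek n q1 q3 (qq ^ (-2 : ℤ) * z⁻¹) mu lam := by
  have hc : ((qq ^ (2 * Hcount n lam mu) : Rˣ) : R)
      = ((qq ^ 2 : Rˣ) : R) ^ (Hcount n lam mu) := by
    rw [pow_mul, Units.val_pow_eq_pow_val]
  simp only [nek]
  rw [hc]
  simp only [Hcount]
  exact assemble _ _ _ _ _ _ _ _ _ _ _
    (fun s _ => key1 qq q1 q3 z hq (armZ lam s) (legZ mu s))
    (fun t _ => key2 qq q1 q3 z hq (armZ mu t) (legZ lam t))
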